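/- Global stability of the Picard–Newton iteration (Lemma 3.1): assume the uniqueness condition α := Mν⁻²‖f‖ < 1. Let u₀ ∈ V be arbitrary and let (uₖ)ₖ≥₀, (ûₖ)ₖ≥₁ be sequences such that for every k ≥ 0, û_{k+1} is a Picard update of uₖ and u_{k+1} is a Newton update of û_{k+1}. Then for every k ≥ 1, ‖ûₖ‖ ≤ ν⁻¹‖f‖ and ‖uₖ‖ ≤ ν⁻¹(1+α)(1−α)⁻¹‖f‖; in particular the iteration is bounded independently of the initial iterate. -/

import Mathlib

open scoped RealInnerProductSpace

set_option maxHeartbeats 1600000 in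
/-- Global stability of the Picard–Newton iteration (Lemma 3.1): under the
uniqueness condition `α := Mν⁻²‖f‖ < 1`, for any initial iterate `u 0`, the
Picard half-steps satisfy `‖uhat k‖ ≤ ν⁻¹‖f‖` and the Newton steps satisfy
`‖u k‖ ≤ ν⁻¹(1+α)(1−α)⁻¹‖f‖` for every `k ≥ 1`. -/
theorem picard_newton_global_stability
    {V : Type*} [NormedAddCommGroup V] [InnerProductSpace ℝ V]
    (b : V →ₗ[ℝ] V →ₗ[ℝ] V →ₗ[ℝ] ℝ)
    (hskew : ∀ z w : V, b z w w = 0)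
    (M : ℝ) (hM : 0 < M)
    (hbound : ∀ z w v : V, |b z w v| ≤ M * ‖z‖ * ‖w‖ * ‖v‖)
    (f : V →L[ℝ] ℝ) (ν : ℝ) (hν : 0 < ν)
    (α : ℝ) (hα : α = M * ν⁻¹ ^ 2 * ‖f‖) (hα1 : α < 1)
    (u uhat : ℕ → V)
    (hPicard : ∀ k : ℕ, ∀ v : V,
      ν * ⟪uhat (k + 1), v⟫ + b (u k) (uhat (k + 1)) v = f v)
    (hNewton : ∀ k : ℕ, ∀ v : V,
      ν * ⟪u (k + 1), v⟫ + b (uhat (k + 1)) (u (k + 1)) v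
        + b (u (k + 1)) (uhat (k + 1)) v - b (uhat (k + 1)) (uhat (k + 1)) v = f v) :
    ∀ k : ℕ, 1 ≤ k →
      ‖uhat k‖ ≤ ν⁻¹ * ‖f‖ ∧ ‖u k‖ ≤ ν⁻¹ * (1 + α) * (1 - α)⁻¹ * ‖f‖ := by
  intro k hk
  obtain ⟨j, rfl⟩ : ∃ j, k = j + 1 := ⟨k - 1, by omega⟩
  have hF : (0:ℝ) ≤ ‖f‖ := norm_nonneg _
  have hαnn : 0 ≤ α := by rw [hα]; positivity
  have h1α : (0:ℝ) < 1 - α := by linarith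
  -- Picard bound
  have h1 := hPicard j (uhat (j + 1))
  rw [hskew (u j) (uhat (j + 1)), add_zero, real_inner_self_eq_norm_sq] at h1
  have hfub : f (uhat (j + 1)) ≤ ‖f‖ * ‖uhat (j + 1)‖ := by
    calc f (uhat (j + 1)) ≤ |f (uhat (j + 1))| := le_abs_self _
      _ = ‖f (uhat (j + 1))‖ := (Real.norm_eq_abs _).symm
      _ ≤ ‖f‖ * ‖uhat (j + 1)‖ := f.le_opNorm _
  have hA : ‖uhat (j + 1)‖ ≤ ν⁻¹ * ‖f‖ := by
    rcases eq_or_lt_of_le (norm_nonneg (uhat (j + 1))) with h0 | h0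
    · rw [← h0]; positivity
    · rw [inv_mul_eq_div, le_div_iff₀ hν]
      nlinarith [h1, hfub, h0]
  refine ⟨hA, ?_⟩
  -- Newton bound
  have h2 := hNewton j (u (j + 1))
  rw [hskew (uhat (j + 1)) (u (j + 1)), add_zero, real_inner_self_eq_norm_sq] at h2
  have e1 : -(M * ‖u (j + 1)‖ * ‖uhat (j + 1)‖ * ‖u (j + 1)‖)
      ≤ b (u (j + 1)) (uhat (j + 1)) (u (j + 1)) :=
    (neg_le_neg (hbound _ _ _)).trans (neg_abs_le _)
  have e2 : b (uhat (j + 1)) (uhat (j + 1)) (u (j + 1))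
      ≤ M * ‖uhat (j + 1)‖ * ‖uhat (j + 1)‖ * ‖u (j + 1)‖ :=
    (le_abs_self _).trans (hbound _ _ _)
  have hfub2 : f (u (j + 1)) ≤ ‖f‖ * ‖u (j + 1)‖ := by
    calc f (u (j + 1)) ≤ |f (u (j + 1))| := le_abs_self _
      _ = ‖f (u (j + 1))‖ := (Real.norm_eq_abs _).symm
      _ ≤ ‖f‖ * ‖u (j + 1)‖ := f.le_opNorm _
  have h3 : ν * ‖u (j + 1)‖ ^ 2 ≤ ‖f‖ * ‖u (j + 1)‖
      + M * ‖u (j + 1)‖ * ‖uhat (j + 1)‖ * ‖u (j + 1)‖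
      + M * ‖uhat (j + 1)‖ * ‖uhat (j + 1)‖ * ‖u (j + 1)‖ := by linarith
  have hαν : α * ν = M * ν⁻¹ * ‖f‖ := by
    rw [hα]; field_simp
  have hαf : α * ‖f‖ = M * (ν⁻¹ * ‖f‖) * (ν⁻¹ * ‖f‖) := by
    rw [hα]; ring
  have hMA : M * ‖uhat (j + 1)‖ ≤ α * ν := by
    rw [hαν]
    nlinarith [hA]
  have hMA2 : M * ‖uhat (j + 1)‖ * ‖uhat (j + 1)‖ ≤ α * ‖f‖ := by
    rw [hαf]
    nlinarith [hA, norm_nonneg (uhat (j + 1)), mul_le_mul hA hA (norm_nonneg _) (by positivity : (0:ℝ) ≤ ν⁻¹ * ‖f‖)]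
  -- key inequality: (1 - α) * ν * B^2 ≤ (1 + α) * F * B
  have hkey : (1 - α) * ν * ‖u (j + 1)‖ ^ 2 ≤ (1 + α) * ‖f‖ * ‖u (j + 1)‖ := by
    nlinarith [h3, hMA, hMA2, norm_nonneg (u (j + 1)), sq_nonneg (‖u (j + 1)‖)]
  have main : ∀ B F : ℝ, 0 ≤ B → 0 ≤ F →
      (1 - α) * ν * B ^ 2 ≤ (1 + α) * F * B →
      B ≤ ν⁻¹ * (1 + α) * (1 - α)⁻¹ * F := by
    intro B F hBnn hFnn hky
    rw [show ν⁻¹ * (1 + α) * (1 - α)⁻¹ * F = ((1 + α) * F) / (ν * (1 - α)) by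
      rw [div_eq_mul_inv, mul_inv]; ring]
    rw [le_div_iff₀ (mul_pos hν h1α)]
    rcases eq_or_lt_of_le hBnn with h0 | h0
    · rw [← h0, zero_mul]
      positivity
    · nlinarith [hky, h0, h1α]
  exact main _ _ (norm_nonneg _) (norm_nonneg _) hkey
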